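/- Let (Ω,F,P) be a probability space, T > 0, α > 0, c > 0, and let f : [0,T] × Ω → [0,∞) be jointly measurable. Suppose C ≥ 0 is such that ∫_Ω exp(c·f(s,ω)) dP(ω) ≤ C for every s ∈ [0,T]. Then ∫_Ω exp( c·α·e^{−αT} · ∫₀ᵀ e^{αs} f(s,ω) ds ) dP(ω) ≤ C, where the outer integral is the Lebesgue (upper) integral with the convention exp(+∞) = +∞. -/

import Mathlib

open MeasureTheory
open scoped ENNReal

/-- The exponential function extended to `ℝ≥0∞`, with the convention `exp(+∞) = +∞`. -/
noncomputable def expENN (x : ℝ≥0∞) : ℝ≥0∞ :=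
  if x = ⊤ then ⊤ else ENNReal.ofReal (Real.exp x.toReal)

/-- Jensen/Fubini estimate: if `∫ exp(c f(s,·)) dP ≤ C` for every `s ∈ [0,T]`, then
`∫ exp(c α e^{-αT} ∫₀ᵀ e^{αs} f(s,·) ds) dP ≤ C`, where the outer integral is the
Lebesgue upper integral with the convention `exp(+∞) = +∞`. -/
theorem stmt2
    {Ω : Type*} [MeasurableSpace Ω] (P : Measure Ω) [IsProbabilityMeasure P]
    (T α c : ℝ) (hT : 0 < T) (hα : 0 < α) (hc : 0 < c)
    (f : ℝ → Ω → ℝ) (hfmeas : Measurable (Function.uncurry f))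
    (hfnonneg : ∀ s ω, 0 ≤ f s ω)
    (C : ℝ) (hC : 0 ≤ C)
    (hbound : ∀ s ∈ Set.Icc (0 : ℝ) T,
      ∫⁻ ω, ENNReal.ofReal (Real.exp (c * f s ω)) ∂P ≤ ENNReal.ofReal C) :
    ∫⁻ ω, expENN (ENNReal.ofReal (c * α * Real.exp (-α * T)) *
        ∫⁻ s in Set.Icc (0 : ℝ) T, ENNReal.ofReal (Real.exp (α * s) * f s ω)) ∂P
      ≤ ENNReal.ofReal C := by
  set M : ℝ := Real.exp (α * T) - 1 with hMdef
  have hM0 : 0 < M := by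
    have := Real.add_one_le_exp (α * T)
    have hαT : 0 < α * T := mul_pos hα hT
    simp only [hMdef]; linarith
  set w : ℝ → ℝ≥0∞ := fun s => ENNReal.ofReal (α * Real.exp (α * s) / M) with hwdef
  have hw : Measurable w := by
    apply ENNReal.measurable_ofReal.comp
    fun_prop
  set ν : Measure ℝ := (volume.restrict (Set.Icc 0 T)).withDensity w with hνdef
  -- total mass computation
  have hcont : Continuous fun s : ℝ => α * Real.exp (α * s) := by fun_prop
  have hftc : ∫ s in (0:ℝ)..T, α * Real.exp (α * s) = M := by
    have : ∫ s in (0:ℝ)..T, α * Real.exp (α * s)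
        = Real.exp (α * T) - Real.exp (α * 0) := by
      apply intervalIntegral.integral_eq_sub_of_hasDerivAt
      · intro x hx
        have h1 : HasDerivAt (fun s : ℝ => α * s) α x := by
          simpa using (hasDerivAt_id x).const_mul α
        simpa [mul_comm] using h1.exp
      · exact hcont.intervalIntegrable 0 T
    rw [this]; simp [hMdef]
  have hkey : (∫⁻ s in Set.Icc (0:ℝ) T, ENNReal.ofReal (α * Real.exp (α * s)))
      = ENNReal.ofReal M := by
    rw [← ofReal_integral_eq_lintegral_ofReal (hcont.integrableOn_Icc)
      (Filter.Eventually.of_forall fun s => by positivity)]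
    congr 1
    rw [MeasureTheory.integral_Icc_eq_integral_Ioc,
      ← intervalIntegral.integral_of_le hT.le, hftc]
  have hν1 : ν Set.univ = 1 := by
    rw [hνdef, withDensity_apply _ MeasurableSet.univ, Measure.restrict_univ]
    calc ∫⁻ s in Set.Icc (0:ℝ) T, w s
        = ∫⁻ s in Set.Icc (0:ℝ) T,
            ENNReal.ofReal (α * Real.exp (α * s)) * ENNReal.ofReal M⁻¹ := by
          apply lintegral_congr; intro s
          show ENNReal.ofReal (α * Real.exp (α * s) / M) = _
          rw [div_eq_mul_inv, ENNReal.ofReal_mul (by positivity)]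
      _ = ENNReal.ofReal M * ENNReal.ofReal M⁻¹ := by
          rw [lintegral_mul_const _ (hcont.measurable.ennreal_ofReal), hkey]
      _ = 1 := by
          rw [← ENNReal.ofReal_mul hM0.le, mul_inv_cancel₀ hM0.ne', ENNReal.ofReal_one]
  haveI : IsProbabilityMeasure ν := ⟨hν1⟩
  set G : Ω → ℝ≥0∞ := fun ω => ∫⁻ s, ENNReal.ofReal (Real.exp (c * f s ω)) ∂ν with hGdef
  -- Fubini step
  have hmeas2 : Measurable fun p : Ω × ℝ => ENNReal.ofReal (Real.exp (c * f p.2 p.1)) := by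
    apply ENNReal.measurable_ofReal.comp
    apply Real.measurable_exp.comp
    exact measurable_const.mul (hfmeas.comp measurable_swap)
  have hA : ∫⁻ ω, G ω ∂P ≤ ENNReal.ofReal C := by
    have hswap : ∫⁻ ω, G ω ∂P
        = ∫⁻ s, ∫⁻ ω, ENNReal.ofReal (Real.exp (c * f s ω)) ∂P ∂ν :=
      lintegral_lintegral_swap hmeas2.aemeasurable
    rw [hswap]
    have hae : ∀ᵐ s ∂ν, s ∈ Set.Icc (0:ℝ) T := by
      have h1 : ∀ᵐ s ∂(volume.restrict (Set.Icc (0:ℝ) T)), s ∈ Set.Icc (0:ℝ) T :=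
        ae_restrict_mem measurableSet_Icc
      exact h1.filter_mono (withDensity_absolutelyContinuous _ _).ae_le
    calc ∫⁻ s, ∫⁻ ω, ENNReal.ofReal (Real.exp (c * f s ω)) ∂P ∂ν
        ≤ ∫⁻ _, ENNReal.ofReal C ∂ν := by
          apply lintegral_mono_ae
          filter_upwards [hae] with s hs using hbound s hs
      _ = ENNReal.ofReal C := by simp
  -- pointwise Jensen step
  have hB : ∀ ω, expENN (ENNReal.ofReal (c * α * Real.exp (-α * T)) *
      ∫⁻ s in Set.Icc (0 : ℝ) T, ENNReal.ofReal (Real.exp (α * s) * f s ω)) ≤ G ω := by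
    intro ω
    by_cases hG : G ω = ⊤
    · rw [hG]; exact le_top
    set h : ℝ → ℝ := fun s => f s ω with hhdef
    have hh : Measurable h := hfmeas.comp (measurable_id.prodMk measurable_const)
    set I : ℝ≥0∞ := ∫⁻ s in Set.Icc (0 : ℝ) T,
      ENNReal.ofReal (Real.exp (α * s) * f s ω) with hIdef
    set m : ℝ≥0∞ := ∫⁻ s, ENNReal.ofReal (c * h s) ∂ν with hmdef
    have hmch : Measurable fun s => ENNReal.ofReal (c * h s) :=
      ENNReal.measurable_ofReal.comp (measurable_const.mul hh)
    have hIc : m = ENNReal.ofReal (c * α / M) * I := by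
      rw [hmdef, hνdef, lintegral_withDensity_eq_lintegral_mul _ hw hmch, hIdef,
        ← lintegral_const_mul _ (show Measurable fun s : ℝ => ENNReal.ofReal (Real.exp (α * s) * f s ω) from ((by fun_prop : Measurable fun s : ℝ => Real.exp (α * s)).mul hh).ennreal_ofReal)]
      apply lintegral_congr; intro s
      simp only [Pi.mul_apply, hwdef]
      rw [← ENNReal.ofReal_mul (by positivity), ← ENNReal.ofReal_mul (by positivity)]
      congr 1
      have := hfnonneg s ω
      field_simp
      ring
    have hκm : ENNReal.ofReal (c * α * Real.exp (-α * T)) * I ≤ m := by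
      rw [hIc]
      apply mul_le_mul_left
      apply ENNReal.ofReal_le_ofReal
      rw [div_eq_mul_inv]
      apply mul_le_mul_of_nonneg_left _ (by positivity)
      rw [neg_mul, Real.exp_neg]
      apply inv_anti₀ hM0
      simp [hMdef]
    have hmG : m ≤ G ω := by
      rw [hmdef, hGdef]
      apply lintegral_mono; intro s
      apply ENNReal.ofReal_le_ofReal
      have := Real.add_one_le_exp (c * h s)
      simp only [hhdef]; linarith
    have hmtop : m ≠ ⊤ := (lt_of_le_of_lt hmG (lt_top_iff_ne_top.mpr hG)).ne
    have hxtop : ENNReal.ofReal (c * α * Real.exp (-α * T)) * I ≠ ⊤ :=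
      (lt_of_le_of_lt hκm (lt_top_iff_ne_top.mpr hmtop)).ne
    -- integrability
    have hch_nn : 0 ≤ᵐ[ν] fun s => c * h s :=
      Filter.Eventually.of_forall fun s => by
        have := hfnonneg s ω; simp only [hhdef]; positivity
    have hech_nn : 0 ≤ᵐ[ν] fun s => Real.exp (c * h s) :=
      Filter.Eventually.of_forall fun s => (Real.exp_pos _).le
    have hint1 : Integrable (fun s => c * h s) ν := by
      refine ⟨(measurable_const.mul hh).aestronglyMeasurable, ?_⟩
      rw [hasFiniteIntegral_iff_ofReal hch_nn]
      exact lt_of_le_of_lt (le_of_eq rfl) (lt_top_iff_ne_top.mpr hmtop)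
    have hint2 : Integrable (fun s => Real.exp (c * h s)) ν := by
      refine ⟨(Real.measurable_exp.comp (measurable_const.mul hh)).aestronglyMeasurable, ?_⟩
      rw [hasFiniteIntegral_iff_ofReal hech_nn]
      exact lt_top_iff_ne_top.mpr hG
    have hJ : Real.exp (∫ s, c * h s ∂ν) ≤ ∫ s, Real.exp (c * h s) ∂ν := by
      exact convexOn_exp.map_integral_le Real.continuous_exp.continuousOn isClosed_univ
        (Filter.Eventually.of_forall fun _ => Set.mem_univ _) hint1 hint2
    have hm' : m = ENNReal.ofReal (∫ s, c * h s ∂ν) :=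
      (ofReal_integral_eq_lintegral_ofReal hint1 hch_nn).symm
    have hG' : G ω = ENNReal.ofReal (∫ s, Real.exp (c * h s) ∂ν) :=
      (ofReal_integral_eq_lintegral_ofReal hint2 hech_nn).symm
    rw [expENN, if_neg hxtop, hG']
    apply ENNReal.ofReal_le_ofReal
    calc Real.exp (ENNReal.ofReal (c * α * Real.exp (-α * T)) * I).toReal
        ≤ Real.exp m.toReal := Real.exp_le_exp.mpr (ENNReal.toReal_mono hmtop hκm)
      _ = Real.exp (∫ s, c * h s ∂ν) := by
          rw [hm', ENNReal.toReal_ofReal (integral_nonneg_of_ae hch_nn)]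
      _ ≤ ∫ s, Real.exp (c * h s) ∂ν := hJ
  calc ∫⁻ ω, expENN (ENNReal.ofReal (c * α * Real.exp (-α * T)) *
        ∫⁻ s in Set.Icc (0 : ℝ) T, ENNReal.ofReal (Real.exp (α * s) * f s ω)) ∂P
      ≤ ∫⁻ ω, G ω ∂P := lintegral_mono hB
    _ ≤ ENNReal.ofReal C := hA
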